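/- Let g₁(s) = max(g(s) + m s, 0) for s ≥ 0, extended to all of ℝ as an odd function, and let g₂ = g₁ − g. Then for every ε > 0 there exists a constant C_ε > 0 such that g₁(s) ≤ C_ε s^{2*−1} + ε g₂(s) for all s ≥ 0. -/
import Mathlib


open Filter Set

/-- With g₁(s) = max(g(s)+ms, 0) for s ≥ 0 extended oddly and g₂ = g₁ − g,
for every ε > 0 there is C_ε > 0 with g₁(s) ≤ C_ε s^{2*−1} + ε g₂(s) for all s ≥ 0,
where 2* = 2N/(N−2). -/
theorem stmt3 (N : ℕ) (hN : 3 ≤ N) (g g₁ g₂ : ℝ → ℝ) (m : ℝ) (hm : 0 < m)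
    (hgc : Continuous g) (hgodd : ∀ s, g (-s) = -g s)
    (hliminf : ⊥ < Filter.liminf (fun s : ℝ => ((g s / s : ℝ) : EReal))
      (nhdsWithin 0 (Set.Ioi 0)))
    (hlimsup : Filter.limsup (fun s : ℝ => ((g s / s : ℝ) : EReal))
      (nhdsWithin 0 (Set.Ioi 0)) = ((-m : ℝ) : EReal))
    (hg3' : Filter.Tendsto (fun s : ℝ => g s / |s| ^ (2 * (N : ℝ) / ((N : ℝ) - 2) - 1))
      Filter.atTop (nhds 0))
    (hg₁ : ∀ s, 0 ≤ s → g₁ s = max (g s + m * s) 0)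
    (hg₁odd : ∀ s, g₁ (-s) = -g₁ s)
    (hg₂ : ∀ s, g₂ s = g₁ s - g s) :
    ∀ ε > (0 : ℝ), ∃ C > (0 : ℝ), ∀ s : ℝ, 0 ≤ s →
      g₁ s ≤ C * s ^ (2 * (N : ℝ) / ((N : ℝ) - 2) - 1) + ε * g₂ s := by
  intro ε hε
  set q : ℝ := 2 * (N : ℝ) / ((N : ℝ) - 2) - 1 with hq_def
  have hN2 : (1 : ℝ) ≤ (N : ℝ) - 2 := by
    have : (3 : ℝ) ≤ (N : ℝ) := by exact_mod_cast hN
    linarith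
  have hq1 : 1 ≤ q := by
    have h2 : (2 : ℝ) ≤ 2 * (N : ℝ) / ((N : ℝ) - 2) := by
      rw [le_div_iff₀ (by linarith)]
      linarith
    simp only [hq_def]; linarith
  have hq0 : 0 < q := by linarith
  have hg0 : g 0 = 0 := by have := hgodd 0; simp at this; linarith
  have hg₁0 : g₁ 0 = 0 := by rw [hg₁ 0 le_rfl, hg0]; simp
  have hg₂nn : ∀ s, 0 ≤ s → m * s ≤ g₂ s := by
    intro s hs
    rw [hg₂ s, hg₁ s hs]
    rcases le_or_gt 0 (g s + m * s) with h | h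
    · rw [max_eq_left h]; linarith
    · rw [max_eq_right h.le]; linarith
  have hg₂0 : ∀ s, 0 ≤ s → 0 ≤ g₂ s := fun s hs =>
    le_trans (mul_nonneg hm.le hs) (hg₂nn s hs)
  -- small region
  have hsmall : ∃ δ > (0:ℝ), ∀ s, 0 < s → s < δ → g s + m * s ≤ ε * (m * s) := by
    have hlt : Filter.limsup (fun s : ℝ => ((g s / s : ℝ) : EReal)) (nhdsWithin 0 (Set.Ioi 0))
        < ((ε * m - m : ℝ) : EReal) := by
      rw [hlimsup]
      exact_mod_cast (by nlinarith : (-m : ℝ) < ε * m - m)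
    have hev := Filter.eventually_lt_of_limsup_lt hlt
    rw [Filter.eventually_iff, Metric.mem_nhdsWithin_iff] at hev
    obtain ⟨δ, hδ, hsub⟩ := hev
    refine ⟨δ, hδ, fun s hs hsδ => ?_⟩
    have hmem : s ∈ Metric.ball (0 : ℝ) δ ∩ Set.Ioi 0 := by
      constructor
      · simp [Real.dist_eq, abs_of_pos hs, hsδ]
      · exact hs
    have hmem2 := hsub hmem
    simp only [Set.mem_setOf_eq] at hmem2
    have hr : g s / s < ε * m - m := by exact_mod_cast hmem2
    have := (div_lt_iff₀ hs).mp hr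
    nlinarith
  -- large region
  have hlarge : ∃ S ≥ (1:ℝ), ∀ s, S ≤ s → g₁ s ≤ (1 + m) * s ^ q := by
    have hev : ∀ᶠ s : ℝ in atTop, g s / |s| ^ q < 1 :=
      hg3'.eventually_lt_const one_pos
    obtain ⟨S₀, hS₀⟩ := Filter.eventually_atTop.mp hev
    refine ⟨max S₀ 1, le_max_right _ _, fun s hs => ?_⟩
    have hs1 : (1 : ℝ) ≤ s := le_trans (le_max_right _ _) hs
    have hs0 : 0 < s := lt_of_lt_of_le one_pos hs1
    have hsq : 0 < s ^ q := Real.rpow_pos_of_pos hs0 q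
    have h1 : g s < s ^ q := by
      have h := hS₀ s (le_trans (le_max_left _ _) hs)
      rw [abs_of_pos hs0] at h
      exact (div_lt_one hsq).mp h
    have h2 : s ≤ s ^ q := by
      calc s = s ^ (1 : ℝ) := (Real.rpow_one s).symm
        _ ≤ s ^ q := Real.rpow_le_rpow_of_exponent_le hs1 hq1
    rw [hg₁ s hs0.le]
    have hfin : g s + m * s ≤ (1 + m) * s ^ q := by nlinarith
    exact max_le hfin (by positivity)
  obtain ⟨δ, hδ, hsmall⟩ := hsmall
  obtain ⟨S, hS1, hlarge⟩ := hlarge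
  -- middle region bound
  have hcont : ContinuousOn (fun s : ℝ => max (g s + m * s) 0) (Set.Icc δ S) :=
    (Continuous.max (hgc.add (continuous_const.mul continuous_id)) continuous_const).continuousOn
  obtain ⟨B, hB⟩ := isCompact_Icc.exists_bound_of_continuousOn hcont
  have hδq : 0 < δ ^ q := Real.rpow_pos_of_pos hδ q
  set C : ℝ := max (1 + m) ((max B 0 + 1) / δ ^ q) with hC
  have hCpos : 0 < C := lt_of_lt_of_le (by positivity) (le_max_right _ _)
  refine ⟨C, hCpos, fun s hs => ?_⟩
  rcases eq_or_lt_of_le hs with rfl | hs0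
  · have hz : (0 : ℝ) ^ q = 0 := Real.zero_rpow (by linarith)
    rw [hg₁0, hg₂ 0, hg₁0, hg0, hz]
    simp
  have hsq0 : 0 ≤ s ^ q := (Real.rpow_pos_of_pos hs0 q).le
  have hg₂s : 0 ≤ ε * g₂ s := mul_nonneg hε.le (hg₂0 s hs)
  rcases lt_or_ge s δ with hlt | hge
  · -- small
    have h1 := hsmall s hs0 hlt
    have h2 : ε * (m * s) ≤ ε * g₂ s := mul_le_mul_of_nonneg_left (hg₂nn s hs) hε.le
    have h3 : g₁ s ≤ ε * g₂ s := by
      rw [hg₁ s hs]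
      exact max_le (by linarith) hg₂s
    nlinarith [mul_nonneg hCpos.le hsq0]
  rcases le_or_gt S s with hSle | hsS
  · -- large
    have h1 := hlarge s hSle
    have h2 : (1 + m) * s ^ q ≤ C * s ^ q :=
      mul_le_mul_of_nonneg_right (le_max_left _ _) hsq0
    linarith
  · -- middle
    have hmem : s ∈ Set.Icc δ S := ⟨hge, hsS.le⟩
    have h1 : g₁ s ≤ max B 0 := by
      rw [hg₁ s hs]
      have := hB s hmem
      calc max (g s + m * s) 0 ≤ ‖max (g s + m * s) 0‖ := le_abs_self _
        _ ≤ B := this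
        _ ≤ max B 0 := le_max_left _ _
    have h2 : δ ^ q ≤ s ^ q := Real.rpow_le_rpow hδ.le hge hq0.le
    have h3 : (max B 0 + 1) / δ ^ q ≤ C := le_max_right _ _
    have h4 : (max B 0 + 1) = ((max B 0 + 1) / δ ^ q) * δ ^ q := by
      field_simp
    have h5 : ((max B 0 + 1) / δ ^ q) * δ ^ q ≤ C * s ^ q := by
      apply mul_le_mul h3 h2 hδq.le hCpos.le
    linarith
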